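/- Let A, B be unital C*-algebras and C = A ⊕ B their ℓ∞ direct sum. Then (a, b) is a C*-extreme point of the closed unit ball of C if and only if a is a C*-extreme point of the closed unit ball of A and b is a C*-extreme point of the closed unit ball of B. -/

import Mathlib

/-- `x` is a C*-extreme point of the closed unit ball of `D`. -/
def IsCStarExtremePt {D : Type*} [NormedRing D] [StarRing D] (x : D) : Prop :=
  ‖x‖ ≤ 1 ∧
    ∀ (k : ℕ) (a t : Fin k → D), (∀ i, ‖a i‖ ≤ 1) → (∀ i, IsUnit (t i)) →
      (∑ i, star (t i) * t i) = 1 → x = ∑ i, star (t i) * a i * t i →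
      ∀ i, ∃ u : D, star u * u = 1 ∧ u * star u = 1 ∧ a i = star u * x * u

private lemma prodIsUnit {A B : Type*} [Ring A] [Ring B] {x : A} {y : B}
    (hx : IsUnit x) (hy : IsUnit y) : IsUnit ((x, y) : A × B) :=
  ⟨⟨(x, y), (↑hx.unit⁻¹, ↑hy.unit⁻¹), by simp [Prod.ext_iff], by simp [Prod.ext_iff]⟩, rfl⟩

private lemma sum_scalar_conj {B : Type*} [NormedRing B] [StarRing B] [NormedAlgebra ℂ B]
    [StarModule ℂ B] {k : ℕ} (hk : 0 < k) :
    ∃ s : B, IsUnit s ∧ ∀ z : B, ∑ _i : Fin k, star s * z * s = z := by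
  have hk' : (0:ℝ) < k := by exact_mod_cast hk
  have hsq : (0:ℝ) < Real.sqrt k := Real.sqrt_pos.2 hk'
  set c : ℝ := (Real.sqrt k)⁻¹ with hc
  have hc0 : (c:ℂ) ≠ 0 := by
    exact_mod_cast (inv_pos.2 hsq).ne'
  refine ⟨(c:ℂ) • 1, ?_, ?_⟩
  · have h : ((c:ℂ) • (1:B)) = algebraMap ℂ B c := by
      simp [Algebra.algebraMap_eq_smul_one]
    rw [h]
    exact (isUnit_iff_ne_zero.2 hc0).map (algebraMap ℂ B)
  · intro z
    have h1 : star ((c:ℂ) • (1:B)) = (c:ℂ) • 1 := by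
      simp [star_smul, Complex.conj_ofReal]
    have h2 : star ((c:ℂ) • (1:B)) * z * ((c:ℂ) • (1:B)) = ((c:ℂ) * (c:ℂ)) • z := by
      rw [h1, smul_mul_assoc, one_mul, mul_smul_comm, mul_one, smul_smul]
    rw [Finset.sum_const, Finset.card_univ, Fintype.card_fin, h2,
      ← Nat.cast_smul_eq_nsmul ℂ, smul_smul]
    have hr : (k:ℝ) * (c * c) = 1 := by
      have h := Real.mul_self_sqrt hk'.le
      field_simp [hc]
      rw [hc, inv_pow, Real.sq_sqrt hk'.le, mul_inv_cancel₀ hk'.ne']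
    have hcc : (k:ℂ) * ((c:ℂ) * (c:ℂ)) = 1 := by exact_mod_cast hr
    rw [hcc, one_smul]

/-- In the ℓ∞-direct sum `C = A ⊕ B` of two unital C*-algebras, `(a, b)` is a
C*-extreme point of the closed unit ball of `C` iff `a` is a C*-extreme point of
the closed unit ball of `B` and `b` is one for `B`. -/
theorem cstarExtreme_prod_iff {A B : Type*}
    [NormedRing A] [StarRing A] [CStarRing A] [NormedAlgebra ℂ A] [CompleteSpace A]
    [StarModule ℂ A]
    [NormedRing B] [StarRing B] [CStarRing B] [NormedAlgebra ℂ B] [CompleteSpace B]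
    [StarModule ℂ B] (a : A) (b : B) :
    IsCStarExtremePt ((a, b) : A × B) ↔ IsCStarExtremePt a ∧ IsCStarExtremePt b := by
  constructor
  · rintro ⟨hn, hext⟩
    have ha1 : ‖a‖ ≤ 1 := le_trans (norm_fst_le ((a, b) : A × B)) hn
    have hb1 : ‖b‖ ≤ 1 := le_trans (norm_snd_le ((a, b) : A × B)) hn
    refine ⟨⟨ha1, ?_⟩, ⟨hb1, ?_⟩⟩
    · intro k x t hx ht hsum hdec i
      rcases Nat.eq_zero_or_pos k with hk | hk
      · subst hk; exact i.elim0
      obtain ⟨s, hsu, hssum⟩ := sum_scalar_conj (B := B) hk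
      have hssum1 : ∑ _i : Fin k, star s * s = (1 : B) := by
        simpa using hssum 1
      have key := hext k (fun j => (x j, b)) (fun j => (t j, s))
        (fun j => by
          rw [Prod.norm_def]; exact max_le (hx j) hb1)
        (fun j => prodIsUnit (ht j) hsu)
        (by
          refine Prod.ext ?_ ?_
          · have h := Prod.fst_sum (f := fun j : Fin k => star ((t j, s) : A × B) * (t j, s))
              (s := Finset.univ)
            exact h.trans hsum
          · have h := Prod.snd_sum (f := fun j : Fin k => star ((t j, s) : A × B) * (t j, s))
              (s := Finset.univ)
            exact h.trans hssum1)
        (by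
          refine Prod.ext ?_ ?_
          · have h := Prod.fst_sum
              (f := fun j : Fin k => star ((t j, s) : A × B) * (x j, b) * (t j, s))
              (s := Finset.univ)
            exact hdec.trans h.symm
          · have h := Prod.snd_sum
              (f := fun j : Fin k => star ((t j, s) : A × B) * (x j, b) * (t j, s))
              (s := Finset.univ)
            exact (hssum b).symm.trans h.symm) i
      obtain ⟨u, h1, h2, h3⟩ := key
      exact ⟨u.1, congrArg Prod.fst h1, congrArg Prod.fst h2, congrArg Prod.fst h3⟩
    · intro k x t hx ht hsum hdec i
      rcases Nat.eq_zero_or_pos k with hk | hk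
      · subst hk; exact i.elim0
      obtain ⟨s, hsu, hssum⟩ := sum_scalar_conj (B := A) hk
      have hssum1 : ∑ _i : Fin k, star s * s = (1 : A) := by
        simpa using hssum 1
      have key := hext k (fun j => (a, x j)) (fun j => (s, t j))
        (fun j => by
          rw [Prod.norm_def]; exact max_le ha1 (hx j))
        (fun j => prodIsUnit hsu (ht j))
        (by
          refine Prod.ext ?_ ?_
          · have h := Prod.fst_sum (f := fun j : Fin k => star ((s, t j) : A × B) * (s, t j))
              (s := Finset.univ)
            exact h.trans hssum1
          · have h := Prod.snd_sum (f := fun j : Fin k => star ((s, t j) : A × B) * (s, t j))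
              (s := Finset.univ)
            exact h.trans hsum)
        (by
          refine Prod.ext ?_ ?_
          · have h := Prod.fst_sum
              (f := fun j : Fin k => star ((s, t j) : A × B) * (a, x j) * (s, t j))
              (s := Finset.univ)
            exact (hssum a).symm.trans h.symm
          · have h := Prod.snd_sum
              (f := fun j : Fin k => star ((s, t j) : A × B) * (a, x j) * (s, t j))
              (s := Finset.univ)
            exact hdec.trans h.symm) i
      obtain ⟨u, h1, h2, h3⟩ := key
      exact ⟨u.2, congrArg Prod.snd h1, congrArg Prod.snd h2, congrArg Prod.snd h3⟩
  · rintro ⟨⟨ha1, hA⟩, ⟨hb1, hB⟩⟩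
    refine ⟨?_, ?_⟩
    · rw [Prod.norm_def]; exact max_le ha1 hb1
    · intro k x t hx ht hsum hdec i
      have hsumA : ∑ j, star ((t j).1) * (t j).1 = (1 : A) := by
        have h := congrArg Prod.fst hsum
        rw [Prod.fst_sum] at h
        exact h
      have hsumB : ∑ j, star ((t j).2) * (t j).2 = (1 : B) := by
        have h := congrArg Prod.snd hsum
        rw [Prod.snd_sum] at h
        exact h
      have hdecA : a = ∑ j, star ((t j).1) * (x j).1 * (t j).1 := by
        have h := congrArg Prod.fst hdec
        rw [Prod.fst_sum] at h
        exact h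
      have hdecB : b = ∑ j, star ((t j).2) * (x j).2 * (t j).2 := by
        have h := congrArg Prod.snd hdec
        rw [Prod.snd_sum] at h
        exact h
      obtain ⟨u, hu1, hu2, hu3⟩ := hA k (fun j => (x j).1) (fun j => (t j).1)
        (fun j => le_trans (norm_fst_le _) (hx j))
        (fun j => (ht j).map (RingHom.fst A B)) hsumA hdecA i
      obtain ⟨v, hv1, hv2, hv3⟩ := hB k (fun j => (x j).2) (fun j => (t j).2)
        (fun j => le_trans (norm_snd_le _) (hx j))
        (fun j => (ht j).map (RingHom.snd A B)) hsumB hdecB i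
      exact ⟨(u, v), Prod.ext hu1 hv1, Prod.ext hu2 hv2, Prod.ext hu3 hv3⟩
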